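/- Let X be a zero-mean random vector in R^d with covariance matrix Σ satisfying the L4-L2 moment equivalence with constant κ. Then for every unit vector v ∈ S^{d−1}, E (vᵀ Off(X⊗X) v)² ≤ 2 κ⁴ ‖Σ‖², where ‖·‖ is the operator norm. -/

import Mathlib

open MeasureTheory ProbabilityTheory Real
open scoped ENNReal NNReal

noncomputable section

/-- The diagonal part of a matrix: off-diagonal entries set to zero. -/
def diagPart {d : ℕ} (M : Matrix (Fin d) (Fin d) ℝ) : Matrix (Fin d) (Fin d) ℝ :=
  Matrix.of fun i j => if i = j then M i j else 0

/-- The off-diagonal part of a matrix. -/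
def offPart {d : ℕ} (M : Matrix (Fin d) (Fin d) ℝ) : Matrix (Fin d) (Fin d) ℝ :=
  M - diagPart M

/-- Outer product `x xᵀ`. -/
def outer {d : ℕ} (x : Fin d → ℝ) : Matrix (Fin d) (Fin d) ℝ :=
  Matrix.of fun i j => x i * x j

/-- Bilinear form `uᵀ M w`. -/
def bilinForm {d : ℕ} (M : Matrix (Fin d) (Fin d) ℝ) (u w : Fin d → ℝ) : ℝ :=
  ∑ i, ∑ j, u i * M i j * w j

/-- Quadratic form `vᵀ M v`. -/
def quadForm {d : ℕ} (M : Matrix (Fin d) (Fin d) ℝ) (v : Fin d → ℝ) : ℝ :=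
  bilinForm M v v

/-- Operator (spectral) norm of a matrix acting on Euclidean space. -/
def opNorm {d : ℕ} (M : Matrix (Fin d) (Fin d) ℝ) : ℝ :=
  ‖LinearMap.toContinuousLinearMap (Matrix.toEuclideanLin M)‖

/-- Effective rank `tr Σ / ‖Σ‖`. -/
def effRank {d : ℕ} (S : Matrix (Fin d) (Fin d) ℝ) : ℝ :=
  S.trace / opNorm S

/-- The unit sphere `S^{d-1}` in `ℝ^d`. -/
def unitSphere (d : ℕ) : Set (Fin d → ℝ) := {v | ∑ i, (v i) ^ 2 = 1}

/-- The truncation function: `ψ(x) = x` on `[-1,1]` and `ψ(x) = sign x` for `|x| > 1`. -/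
def psi (x : ℝ) : ℝ := max (-1) (min 1 x)

variable {Ω : Type*} [MeasureSpace Ω]

/-- `X` has zero mean (coordinatewise integrable with zero integral). -/
def ZeroMean {d : ℕ} (X : Ω → Fin d → ℝ) : Prop :=
  ∀ i, Integrable (fun ω => X ω i) ∧ ∫ ω, X ω i = 0

/-- `S` is the covariance matrix of the (zero-mean) random vector `X`. -/
def IsCov {d : ℕ} (X : Ω → Fin d → ℝ) (S : Matrix (Fin d) (Fin d) ℝ) : Prop :=
  ∀ i j, S i j = ∫ ω, X ω i * X ω j

/-- All fourth moments of the coordinates of `X` are finite. -/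
def FiniteFourthMoments {d : ℕ} (X : Ω → Fin d → ℝ) : Prop :=
  ∀ i j k l : Fin d, Integrable (fun ω => X ω i * X ω j * X ω k * X ω l)

/-- The `L₄-L₂` moment equivalence (hypercontractivity) with constant `κ`:
for every unit vector `v`, `(E|⟨X,v⟩|⁴)^{1/4} ≤ κ (E|⟨X,v⟩|²)^{1/2}`. -/
def L4L2 {d : ℕ} (X : Ω → Fin d → ℝ) (κ : ℝ) : Prop :=
  ∀ v ∈ unitSphere d,
    (∫ ω, |∑ i, X ω i * v i| ^ 4) ^ ((1 : ℝ)/4) ≤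
      κ * (∫ ω, |∑ i, X ω i * v i| ^ 2) ^ ((1 : ℝ)/2)

/-- `ε : Ω → Fin d → ℝ` is a vector of i.i.d. Bernoulli(p) {0,1}-valued random variables. -/
def IsBernoulliMask {d : ℕ} (p : ℝ) (ε : Ω → Fin d → ℝ) : Prop :=
  (∀ ω i, ε ω i = 0 ∨ ε ω i = 1) ∧
  (∀ i, Measurable fun ω => ε ω i) ∧
  (∀ i, (ℙ : Measure Ω) {ω | ε ω i = 1} = ENNReal.ofReal p) ∧
  iIndepFun (fun i ω => ε ω i) ℙ

/-- `Y = X ⊙ p`: the `p`-sparsification of `X` by the Bernoulli mask `ε`,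
with `ε` independent of `X`. -/
def IsSparsified {d : ℕ} (p : ℝ) (X ε Y : Ω → Fin d → ℝ) : Prop :=
  IsBernoulliMask p ε ∧ Measurable X ∧ IndepFun X ε ∧ ∀ ω i, Y ω i = X ω i * ε ω i

/-- `Y 0, ..., Y (N-1)` are i.i.d. copies of the `p`-sparsification of `X`. -/
def IsIIDSparsifiedSample {d N : ℕ} (p : ℝ) (X : Ω → Fin d → ℝ)
    (Y : Fin N → Ω → Fin d → ℝ) : Prop :=
  (∀ j, Measurable (Y j)) ∧
  iIndepFun Y ℙ ∧
  ∃ ε Y₀, Measurable Y₀ ∧ IsSparsified p X ε Y₀ ∧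
    ∀ j, Measure.map (Y j) ℙ = Measure.map Y₀ ℙ

/-- `θ` is a Gaussian vector with mean `m` and covariance `σ2 • I` (independent
Gaussian coordinates). -/
def IsGaussianVecIndep {d : ℕ} (m : Fin d → ℝ) (σ2 : ℝ≥0) (θ : Ω → Fin d → ℝ) : Prop :=
  (∀ i, Measurable fun ω => θ ω i) ∧
  (∀ i, Measure.map (fun ω => θ ω i) ℙ = gaussianReal (m i) σ2) ∧
  iIndepFun (fun i ω => θ ω i) ℙ

/-- `G` is a centered Gaussian vector with covariance matrix `S`: every linear marginal
`⟨G, v⟩` is a real Gaussian with mean `0` and variance `vᵀ S v`. -/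
def IsCenteredGaussianVector {d : ℕ} (S : Matrix (Fin d) (Fin d) ℝ) (G : Ω → Fin d → ℝ) : Prop :=
  Measurable G ∧
  ∀ v : Fin d → ℝ, Measure.map (fun ω => ∑ i, G ω i * v i) ℙ =
    gaussianReal 0 (quadForm S v).toNNReal

end


section AuxStatement12

open MeasureTheory

private lemma aux_rpow_ineq {A B κ : ℝ} (hA : 0 ≤ A) (hB : 0 ≤ B) (hκ : 0 ≤ κ)
    (h : A ^ ((1:ℝ)/4) ≤ κ * B ^ ((1:ℝ)/2)) : A ≤ κ ^ 4 * B ^ 2 := by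
  have h4 := pow_le_pow_left₀ (Real.rpow_nonneg hA _) h 4
  calc A = (A ^ ((1:ℝ)/4)) ^ (4:ℕ) := by
        rw [← Real.rpow_natCast (A ^ ((1:ℝ)/4)) 4, ← Real.rpow_mul hA]
        norm_num
    _ ≤ (κ * B ^ ((1:ℝ)/2)) ^ (4:ℕ) := h4
    _ = κ ^ 4 * B ^ 2 := by
        rw [mul_pow, ← Real.rpow_natCast (B ^ ((1:ℝ)/2)) 4, ← Real.rpow_mul hB]
        norm_num

private lemma aux_quad_le_opNorm {d : ℕ} (S : Matrix (Fin d) (Fin d) ℝ) {v : Fin d → ℝ}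
    (hv : ∑ i, v i ^ 2 = 1) : quadForm S v ≤ opNorm S := by
  set v' : EuclideanSpace ℝ (Fin d) := (WithLp.equiv 2 (Fin d → ℝ)).symm v with hv'
  set w' : EuclideanSpace ℝ (Fin d) := (WithLp.equiv 2 (Fin d → ℝ)).symm (Matrix.mulVec S v)
    with hw'
  have hnorm : ‖v'‖ = 1 := by
    rw [EuclideanSpace.norm_eq]
    have : ∀ i, ‖v' i‖ ^ 2 = v i ^ 2 := fun i => by
      simp [hv', WithLp.equiv_symm_apply, PiLp.toLp_apply, Real.norm_eq_abs, sq_abs]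
    simp_rw [this, hv, Real.sqrt_one]
  have hkey : quadForm S v = inner ℝ v' w' := by
    rw [PiLp.inner_apply]
    simp only [RCLike.inner_apply, conj_trivial, hv', hw', WithLp.equiv_symm_apply, PiLp.toLp_apply]
    unfold quadForm bilinForm Matrix.mulVec dotProduct
    refine Finset.sum_congr rfl fun i _ => ?_
    simp only [Finset.sum_mul]
    exact Finset.sum_congr rfl fun j _ => by ring
  have hw : w' = Matrix.toEuclideanLin S v' := rfl
  have hle : inner ℝ v' w' ≤ ‖v'‖ * ‖w'‖ := real_inner_le_norm v' w'
  have hwn : ‖w'‖ ≤ opNorm S * ‖v'‖ := by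
    rw [hw]
    exact (LinearMap.toContinuousLinearMap (Matrix.toEuclideanLin S)).le_opNorm v'
  calc quadForm S v = inner ℝ v' w' := hkey
    _ ≤ ‖v'‖ * ‖w'‖ := hle
    _ ≤ ‖v'‖ * (opNorm S * ‖v'‖) := mul_le_mul_of_nonneg_left hwn (norm_nonneg _)
    _ = opNorm S := by rw [hnorm]; ring

private lemma aux_quad_off {d : ℕ} (x v : Fin d → ℝ) :
    quadForm (offPart (outer x)) v =
      (∑ i, x i * v i) ^ 2 - ∑ i, v i ^ 2 * (x i * x i) := by
  have h1 : (∑ i, x i * v i) ^ 2 = ∑ i, ∑ j, v i * (x i * x j) * v j := by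
    rw [sq, Finset.sum_mul_sum]
    exact Finset.sum_congr rfl fun i _ => Finset.sum_congr rfl fun j _ => by ring
  simp only [quadForm, bilinForm, offPart, diagPart, outer, Matrix.sub_apply, Matrix.of_apply,
    mul_sub, sub_mul, Finset.sum_sub_distrib, h1]
  congr 1
  refine Finset.sum_congr rfl fun i _ => ?_
  simp only [mul_ite, ite_mul, mul_zero, zero_mul]
  rw [Finset.sum_ite_eq _ i (fun j => v i * (x i * x j) * v j)]
  simp only [Finset.mem_univ, if_true]
  ring

end AuxStatement12

/-- If `X` is zero-mean with covariance `Σ` satisfying `L₄-L₂` with constant `κ`,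
then for every unit vector `v`, `E (vᵀ Off(X⊗X) v)² ≤ 2 κ⁴ ‖Σ‖²`. -/
theorem statement_12 {Ω : Type*} [MeasureSpace Ω] [IsProbabilityMeasure (ℙ : Measure Ω)]
    {d : ℕ} (X : Ω → Fin d → ℝ) (S : Matrix (Fin d) (Fin d) ℝ) (κ : ℝ)
    (hXm : Measurable X) (hmean : ZeroMean X) (hcov : IsCov X S)
    (hmom : FiniteFourthMoments X) (hκ : 1 ≤ κ) (hL : L4L2 X κ) :
    ∀ v ∈ unitSphere d,
      (∫ ω, (quadForm (offPart (outer (X ω))) v) ^ 2) ≤ 2 * κ ^ 4 * (opNorm S) ^ 2 := by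
  intro v hv
  have hv1 : ∑ i, v i ^ 2 = 1 := hv
  have hκ0 : (0:ℝ) ≤ κ := le_trans zero_le_one hκ
  have hXi : ∀ i, AEStronglyMeasurable (fun ω => X ω i) (ℙ : Measure Ω) :=
    fun i => ((measurable_pi_apply i).comp hXm).aestronglyMeasurable
  -- products of two coordinates are in L²
  have hXX2 : ∀ i j, MemLp (fun ω => X ω i * X ω j) 2 (ℙ : Measure Ω) := by
    intro i j
    have hm : AEStronglyMeasurable (fun ω => X ω i * X ω j) (ℙ : Measure Ω) :=
      (hXi i).mul (hXi j)
    rw [memLp_two_iff_integrable_sq hm]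
    have heq : (fun ω => (X ω i * X ω j) ^ 2)
        = fun ω => X ω i * X ω i * X ω j * X ω j := by funext ω; ring
    rw [heq]; exact hmom i i j j
  have hXXint : ∀ i j, Integrable (fun ω => X ω i * X ω j) (ℙ : Measure Ω) :=
    fun i j => (hXX2 i j).integrable one_le_two
  have hX4int : ∀ i, Integrable (fun ω => X ω i ^ 4) (ℙ : Measure Ω) := by
    intro i
    have heq : (fun ω => X ω i ^ 4) = fun ω => X ω i * X ω i * X ω i * X ω i := by
      funext ω; ring
    rw [heq]; exact hmom i i i i
  set Z : Ω → ℝ := fun ω => ∑ i, X ω i * v i with hZdef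
  set g : Ω → ℝ := fun ω => ∑ i, v i ^ 2 * (X ω i * X ω i) with hgdef
  have hZsq_eq : ∀ ω, Z ω ^ 2 = ∑ i, ∑ j, (v i * v j) * (X ω i * X ω j) := by
    intro ω
    rw [hZdef, sq, Finset.sum_mul_sum]
    exact Finset.sum_congr rfl fun i _ => Finset.sum_congr rfl fun j _ => by ring
  have hZ2mem : MemLp (fun ω => Z ω ^ 2) 2 (ℙ : Measure Ω) := by
    have heq : (fun ω => Z ω ^ 2)
        = fun ω => ∑ i, ∑ j, (v i * v j) * (X ω i * X ω j) := funext hZsq_eq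
    rw [heq]
    exact memLp_finset_sum _ fun i _ =>
      memLp_finset_sum _ fun j _ => (hXX2 i j).const_mul _
  have hZ4int : Integrable (fun ω => Z ω ^ 4) (ℙ : Measure Ω) := by
    have h := hZ2mem.integrable_sq
    have heq : (fun ω => (Z ω ^ 2) ^ 2) = fun ω => Z ω ^ 4 := by funext ω; ring
    rwa [heq] at h
  have hgmem : MemLp g 2 (ℙ : Measure Ω) :=
    memLp_finset_sum _ fun i _ => (hXX2 i i).const_mul _
  have hg2int : Integrable (fun ω => g ω ^ 2) (ℙ : Measure Ω) := hgmem.integrable_sq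
  have hgnonneg : ∀ ω, 0 ≤ g ω := fun ω =>
    Finset.sum_nonneg fun i _ => mul_nonneg (sq_nonneg _) (mul_self_nonneg _)
  -- the value of ∫ Z²
  have hZ2val : ∫ ω, Z ω ^ 2 = quadForm S v := by
    calc ∫ ω, Z ω ^ 2 = ∫ ω, ∑ i, ∑ j, (v i * v j) * (X ω i * X ω j) := by
          simp_rw [hZsq_eq]
      _ = ∑ i, ∑ j, (v i * v j) * ∫ ω, X ω i * X ω j := by
          rw [integral_finset_sum _ fun i _ =>
            integrable_finset_sum _ fun j _ => (hXXint i j).const_mul _]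
          refine Finset.sum_congr rfl fun i _ => ?_
          rw [integral_finset_sum _ fun j _ => (hXXint i j).const_mul _]
          exact Finset.sum_congr rfl fun j _ => integral_const_mul _ _
      _ = quadForm S v := by
          unfold quadForm bilinForm
          refine Finset.sum_congr rfl fun i _ => Finset.sum_congr rfl fun j _ => ?_
          rw [← hcov i j]; ring
  have habs4 : ∀ x : ℝ, |x| ^ 4 = x ^ 4 := fun x => by
    rw [← abs_pow, abs_of_nonneg (by positivity)]
  have habs2 : ∀ x : ℝ, |x| ^ 2 = x ^ 2 := fun x => sq_abs x
  -- the L4-L2 inequality for Z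
  have hZ4le : ∫ ω, Z ω ^ 4 ≤ κ ^ 4 * (quadForm S v) ^ 2 := by
    have h := hL v hv
    simp_rw [habs4, habs2] at h
    have := aux_rpow_ineq (integral_nonneg fun ω => by positivity)
      (integral_nonneg fun ω => by positivity) hκ0 h
    rwa [hZ2val] at this
  -- basic facts about S
  have hSdiag_nonneg : ∀ i, 0 ≤ S i i := by
    intro i
    rw [hcov i i]
    exact integral_nonneg fun ω => mul_self_nonneg _
  have hQnonneg : 0 ≤ quadForm S v := by
    rw [← hZ2val]; exact integral_nonneg fun ω => sq_nonneg _
  have hQle : quadForm S v ≤ opNorm S := aux_quad_le_opNorm S hv1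
  have hop0 : (0:ℝ) ≤ opNorm S := norm_nonneg _
  -- coordinate L4-L2 : ∫ Xᵢ⁴ ≤ κ⁴ (S i i)²
  have hX4le : ∀ i, ∫ ω, X ω i ^ 4 ≤ κ ^ 4 * (S i i) ^ 2 := by
    intro i
    set e : Fin d → ℝ := fun j => if j = i then 1 else 0 with he
    have hes : e ∈ unitSphere d := by
      show ∑ j, e j ^ 2 = 1
      simp [he, Finset.sum_ite_eq']
    have hsum : ∀ ω, ∑ j, X ω j * e j = X ω i := by
      intro ω; simp [he, mul_ite, Finset.sum_ite_eq']
    have h := hL e hes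
    simp_rw [hsum, habs4, habs2] at h
    have hX2 : ∫ ω, X ω i ^ 2 = S i i := by
      rw [hcov i i]
      refine integral_congr_ae (Filter.Eventually.of_forall fun ω => ?_)
      ring
    have := aux_rpow_ineq (integral_nonneg fun ω => by positivity)
      (integral_nonneg fun ω => by positivity) hκ0 h
    rwa [hX2] at this
  have hSdiag_le : ∀ i, S i i ≤ opNorm S := by
    intro i
    set e : Fin d → ℝ := fun j => if j = i then 1 else 0 with he
    have hes : ∑ j, e j ^ 2 = 1 := by simp [he, Finset.sum_ite_eq']
    have hq : quadForm S e = S i i := by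
      simp [quadForm, bilinForm, he, mul_ite, ite_mul, mul_zero, zero_mul,
        Finset.sum_ite_eq', Finset.sum_ite_eq]
    have := aux_quad_le_opNorm S hes
    rwa [hq] at this
  -- Cauchy–Schwarz pointwise for g
  have hgsq_le : ∀ ω, g ω ^ 2 ≤ ∑ i, v i ^ 2 * X ω i ^ 4 := by
    intro ω
    have h := Finset.sum_mul_sq_le_sq_mul_sq Finset.univ (fun i => v i)
      (fun i => v i * X ω i ^ 2)
    have h1 : ∑ i, v i * (v i * X ω i ^ 2) = g ω := by
      rw [hgdef]; exact Finset.sum_congr rfl fun i _ => by ring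
    have h2 : ∑ i, (v i * X ω i ^ 2) ^ 2 = ∑ i, v i ^ 2 * X ω i ^ 4 := by
      exact Finset.sum_congr rfl fun i _ => by ring
    rw [h1, h2, hv1, one_mul] at h
    exact h
  have hg2le : ∫ ω, g ω ^ 2 ≤ κ ^ 4 * (opNorm S) ^ 2 := by
    have hint : Integrable (fun ω => ∑ i, v i ^ 2 * X ω i ^ 4) (ℙ : Measure Ω) :=
      integrable_finset_sum _ fun i _ => (hX4int i).const_mul _
    have h1 : ∫ ω, g ω ^ 2 ≤ ∫ ω, ∑ i, v i ^ 2 * X ω i ^ 4 :=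
      integral_mono hg2int hint hgsq_le
    have h2 : ∫ ω, ∑ i, v i ^ 2 * X ω i ^ 4 = ∑ i, v i ^ 2 * ∫ ω, X ω i ^ 4 := by
      rw [integral_finset_sum _ fun i _ => (hX4int i).const_mul _]
      exact Finset.sum_congr rfl fun i _ => integral_const_mul _ _
    have h3 : ∑ i, v i ^ 2 * ∫ ω, X ω i ^ 4 ≤ ∑ i, v i ^ 2 * (κ ^ 4 * (opNorm S) ^ 2) := by
      refine Finset.sum_le_sum fun i _ => ?_
      refine mul_le_mul_of_nonneg_left ?_ (sq_nonneg _)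
      calc ∫ ω, X ω i ^ 4 ≤ κ ^ 4 * (S i i) ^ 2 := hX4le i
        _ ≤ κ ^ 4 * (opNorm S) ^ 2 := by
            refine mul_le_mul_of_nonneg_left ?_ (by positivity)
            exact pow_le_pow_left₀ (hSdiag_nonneg i) (hSdiag_le i) 2
    have h4 : ∑ i, v i ^ 2 * (κ ^ 4 * (opNorm S) ^ 2) = κ ^ 4 * (opNorm S) ^ 2 := by
      rw [← Finset.sum_mul, hv1, one_mul]
    linarith
  -- pointwise identity and the splitting bound
  have hpt : ∀ ω, quadForm (offPart (outer (X ω))) v = Z ω ^ 2 - g ω := by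
    intro ω
    rw [aux_quad_off (X ω) v]
  have hsplit : ∫ ω, (quadForm (offPart (outer (X ω))) v) ^ 2
      ≤ ∫ ω, (Z ω ^ 4 + g ω ^ 2) := by
    refine integral_mono_of_nonneg (Filter.Eventually.of_forall fun ω => sq_nonneg _)
      (hZ4int.add hg2int) (Filter.Eventually.of_forall fun ω => ?_)
    simp only [hpt]
    have h1 : 0 ≤ Z ω ^ 2 * g ω := mul_nonneg (sq_nonneg _) (hgnonneg ω)
    nlinarith [sq_nonneg (Z ω ^ 2 - g ω), sq_nonneg (Z ω ^ 2 + g ω)]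
  have hQ2le : (quadForm S v) ^ 2 ≤ (opNorm S) ^ 2 := pow_le_pow_left₀ hQnonneg hQle 2
  calc ∫ ω, (quadForm (offPart (outer (X ω))) v) ^ 2
      ≤ ∫ ω, (Z ω ^ 4 + g ω ^ 2) := hsplit
    _ = (∫ ω, Z ω ^ 4) + ∫ ω, g ω ^ 2 := integral_add hZ4int hg2int
    _ ≤ κ ^ 4 * (quadForm S v) ^ 2 + κ ^ 4 * (opNorm S) ^ 2 := add_le_add hZ4le hg2le
    _ ≤ κ ^ 4 * (opNorm S) ^ 2 + κ ^ 4 * (opNorm S) ^ 2 := by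
        refine add_le_add_left (mul_le_mul_of_nonneg_left hQ2le (by positivity)) _
    _ = 2 * κ ^ 4 * (opNorm S) ^ 2 := by ring
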